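/- Let χ be a Dirichlet character modulo a nonzero ideal 𝔮 of 𝒪_K, let v ∈ ℝ and u₁, u₂ ∈ {0,1}, and define χ_∞(α) := |σ₁(α)/σ₂(α)|^{iv}·sgn(σ₁(α))^{u₁}·sgn(σ₂(α))^{u₂} for nonzero α ∈ K. Set g := 0 if sgn(σ₂(ε))^{u₂} = 1 and g := 1 if sgn(σ₂(ε))^{u₂} = −1, and ρ := g/2 − arg(χ(ε))/(2π) with arg taking values in (−π, π]. Then χ(u)χ_∞(u) = 1 for every unit u ∈ 𝒪_Kˣ if and only if both of the following hold: (i) v = π(n + ρ)/log ε for some n ∈ ℤ, and (ii) u₁ = u₂ if χ(−1) = 1, and u₁ ≠ u₂ if χ(−1) = −1. -/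

import Mathlib

open NumberField Ideal

noncomputable section
open scoped Classical

lemma my_real_sign_mul {x y : ℝ} (hx : x ≠ 0) (hy : y ≠ 0) :
    Real.sign (x*y) = Real.sign x * Real.sign y := by
  rcases hx.lt_or_gt with h|h <;> rcases hy.lt_or_gt with h'|h'
  · rw [Real.sign_of_pos (mul_pos_of_neg_of_neg h h'), Real.sign_of_neg h, Real.sign_of_neg h']; ring
  · rw [Real.sign_of_neg (mul_neg_of_neg_of_pos h h'), Real.sign_of_neg h, Real.sign_of_pos h']; ring
  · rw [Real.sign_of_neg (mul_neg_of_pos_of_neg h h'), Real.sign_of_pos h, Real.sign_of_neg h']; ring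
  · rw [Real.sign_of_pos (mul_pos h h'), Real.sign_of_pos h, Real.sign_of_pos h']; ring

/-- The infinite part `χ_∞(α) = |σ₁(α)/σ₂(α)|^{iv} sgn(σ₁(α))^{u₁} sgn(σ₂(α))^{u₂}`. -/
def ChiInf (K : Type) [Field K] [NumberField K] (σ₁ σ₂ : K →+* ℝ) (v : ℝ) (u₁ u₂ : ℕ)
    (α : K) : ℂ :=
  ((|σ₁ α / σ₂ α| : ℝ) : ℂ) ^ (Complex.I * (v : ℂ)) *
    ((Real.sign (σ₁ α) : ℝ) : ℂ) ^ u₁ * ((Real.sign (σ₂ α) : ℝ) : ℂ) ^ u₂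

lemma my_chiInf_mul (K : Type) [Field K] [NumberField K] (σ₁ σ₂ : K →+* ℝ) (v : ℝ) (u₁ u₂ : ℕ)
    {α β : K} (hα : α ≠ 0) (hβ : β ≠ 0) :
    ChiInf K σ₁ σ₂ v u₁ u₂ (α*β) = ChiInf K σ₁ σ₂ v u₁ u₂ α * ChiInf K σ₁ σ₂ v u₁ u₂ β := by
  have h1α : σ₁ α ≠ 0 := fun h => hα (σ₁.injective (by simp [h]))
  have h1β : σ₁ β ≠ 0 := fun h => hβ (σ₁.injective (by simp [h]))
  have h2α : σ₂ α ≠ 0 := fun h => hα (σ₂.injective (by simp [h]))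
  have h2β : σ₂ β ≠ 0 := fun h => hβ (σ₂.injective (by simp [h]))
  unfold ChiInf
  rw [σ₁.map_mul, σ₂.map_mul, my_real_sign_mul h1α h1β, my_real_sign_mul h2α h2β,
      show σ₁ α * σ₁ β / (σ₂ α * σ₂ β) = (σ₁ α / σ₂ α) * (σ₁ β / σ₂ β) by field_simp,
      abs_mul, Complex.ofReal_mul, Complex.mul_cpow_ofReal_nonneg (abs_nonneg _) (abs_nonneg _)]
  push_cast
  ring

lemma my_norm_two_embeddings (K : Type) [Field K] [NumberField K]
    (hdeg : Module.finrank ℚ K = 2) (σ₁ σ₂ : K →+* ℝ) (hσ : σ₁ ≠ σ₂) (x : K) :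
    |σ₁ x * σ₂ x| = |(Algebra.norm ℚ x : ℚ)| := by
  set τ₁ : K →ₐ[ℚ] ℂ := (Complex.ofRealHom.comp σ₁).toRatAlgHom with hτ₁
  set τ₂ : K →ₐ[ℚ] ℂ := (Complex.ofRealHom.comp σ₂).toRatAlgHom with hτ₂
  have hτ : τ₁ ≠ τ₂ := by
    intro h
    apply hσ
    ext y
    have := congrArg (fun f => (f : K →ₐ[ℚ] ℂ) y) h
    simpa [hτ₁, hτ₂, RingHom.toRatAlgHom, Complex.ofReal_inj] using this
  have hcard : Fintype.card (K →ₐ[ℚ] ℂ) = 2 := by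
    rw [AlgHom.card]; exact hdeg
  have huniv : (Finset.univ : Finset (K →ₐ[ℚ] ℂ)) = {τ₁, τ₂} := by
    symm
    apply Finset.eq_of_subset_of_card_le (Finset.subset_univ _)
    rw [Finset.card_univ, hcard, Finset.card_insert_of_notMem (by simp [hτ]),
      Finset.card_singleton]
  have hNorm : (algebraMap ℚ ℂ) (Algebra.norm ℚ x) = τ₁ x * τ₂ x := by
    rw [Algebra.norm_eq_prod_embeddings, huniv, Finset.prod_insert (by simp [hτ]),
      Finset.prod_singleton]
  have h2 := congrArg (norm : ℂ → ℝ) hNorm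
  have hτ₁x : τ₁ x = ((σ₁ x : ℝ) : ℂ) := rfl
  have hτ₂x : τ₂ x = ((σ₂ x : ℝ) : ℂ) := rfl
  rw [hτ₁x, hτ₂x, norm_mul, Complex.norm_real, Complex.norm_real, Real.norm_eq_abs, Real.norm_eq_abs] at h2
  rw [abs_mul]
  rw [show (algebraMap ℚ ℂ) (Algebra.norm ℚ x) = (((Algebra.norm ℚ x : ℚ) : ℝ) : ℂ) by push_cast; rfl,
    Complex.norm_real, Real.norm_eq_abs] at h2
  rw [← h2]
  push_cast
  ring

set_option maxHeartbeats 1000000 in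
set_option synthInstance.maxHeartbeats 200000 in
theorem statement13
    (K : Type) [Field K] [NumberField K]
    (d : ℤ) (hd1 : 1 < d) (hdsf : Squarefree d)
    (hdeg : Module.finrank ℚ K = 2) (hθ : ∃ θ : K, θ ^ 2 = (d : K))
    (σ₁ σ₂ : K →+* ℝ) (hσ : σ₁ ≠ σ₂)
    (ε : (𝓞 K)ˣ) (hε1 : 1 < σ₁ ((ε : 𝓞 K) : K))
    (hεfund : ∀ u : (𝓞 K)ˣ, ∃ n : ℤ, u = ε ^ n ∨ u = -ε ^ n)
    (𝔮 : Ideal (𝓞 K)) (h𝔮 : 𝔮 ≠ ⊥)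
    (χ : MulChar ((𝓞 K) ⧸ 𝔮) ℂ) (v : ℝ) (u₁ u₂ : ℕ) (hu₁ : u₁ ≤ 1) (hu₂ : u₂ ≤ 1)
    (g : ℝ) (hg : g = if (Real.sign (σ₂ ((ε : 𝓞 K) : K))) ^ u₂ = 1 then 0 else 1)
    (ρ : ℝ)
    (hρ : ρ = g / 2 - (χ (Ideal.Quotient.mk 𝔮 ((ε : 𝓞 K)))).arg / (2 * Real.pi)) :
    (∀ u : (𝓞 K)ˣ,
        χ (Ideal.Quotient.mk 𝔮 ((u : 𝓞 K))) *
          ChiInf K σ₁ σ₂ v u₁ u₂ ((u : 𝓞 K) : K) = 1) ↔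
      ((∃ n : ℤ, v = Real.pi * ((n : ℝ) + ρ) / Real.log (σ₁ ((ε : 𝓞 K) : K))) ∧
        (χ (Ideal.Quotient.mk 𝔮 (-1)) = 1 → u₁ = u₂) ∧
        (χ (Ideal.Quotient.mk 𝔮 (-1)) = -1 → u₁ ≠ u₂)) := by
  classical
  have hπ : (0:ℝ) < Real.pi := Real.pi_pos
  set εK : K := ((ε : 𝓞 K) : K) with hεKdef
  have hσ₁εpos : 0 < σ₁ εK := lt_trans one_pos hε1
  -- |σ₁ ε · σ₂ ε| = 1
  have hNabs : |σ₁ εK * σ₂ εK| = 1 := by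
    rw [my_norm_two_embeddings K hdeg σ₁ σ₂ hσ εK]
    have h1 : |(RingOfIntegers.norm ℚ (ε : 𝓞 K) : ℚ)| = 1 :=
      NumberField.isUnit_iff_norm.mp ε.isUnit
    rw [RingOfIntegers.coe_norm] at h1
    exact_mod_cast congrArg (fun q : ℚ => ((q : ℝ))) h1
  have hσ₂ne : σ₂ εK ≠ 0 := by
    intro h; rw [h, mul_zero, abs_zero] at hNabs; norm_num at hNabs
  have hσ₂abs : |σ₂ εK| = (σ₁ εK)⁻¹ := by
    rw [abs_mul, abs_of_pos hσ₁εpos] at hNabs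
    field_simp
    linarith [hNabs]
  have hratio : |σ₁ εK / σ₂ εK| = σ₁ εK ^ 2 := by
    rw [abs_div, abs_of_pos hσ₁εpos, hσ₂abs, division_def, inv_inv]; ring
  set L : ℝ := Real.log (σ₁ εK) with hLdef
  have hLpos : 0 < L := Real.log_pos hε1
  set s : ℝ := Real.sign (σ₂ εK) with hsdef
  have hs1 : s = 1 ∨ s = -1 := by
    rcases hσ₂ne.lt_or_gt with h|h
    · right; exact Real.sign_of_neg h
    · left; exact Real.sign_of_pos h
  -- finiteness and |χ(ε)| = 1
  haveI : Fintype ((𝓞 K) ⧸ 𝔮) := @Fintype.ofFinite _ (Ideal.finiteQuotientOfFreeOfNeBot 𝔮 h𝔮)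
  haveI : Finite ((𝓞 K) ⧸ 𝔮) := Finite.of_fintype _
  haveI : Finite (((𝓞 K) ⧸ 𝔮)ˣ) := inferInstance
  set xε : (𝓞 K) ⧸ 𝔮 := Ideal.Quotient.mk 𝔮 ((ε : 𝓞 K)) with hxεdef
  have hxεunit : IsUnit xε := ε.isUnit.map (Ideal.Quotient.mk 𝔮)
  have hχεabs : ‖χ xε‖ = 1 := by
    set k := Nat.card (((𝓞 K) ⧸ 𝔮)ˣ) with hkdef
    have hk0 : k ≠ 0 := Nat.card_ne_zero.mpr ⟨⟨1⟩, inferInstance⟩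
    have hpow : xε ^ k = 1 := by
      have h1 : hxεunit.unit ^ k = 1 := pow_card_eq_one'
      calc xε ^ k = ((hxεunit.unit : ((𝓞 K) ⧸ 𝔮)ˣ) : ((𝓞 K) ⧸ 𝔮)) ^ k := by
            rw [hxεunit.unit_spec]
        _ = ((hxεunit.unit ^ k : ((𝓞 K) ⧸ 𝔮)ˣ) : ((𝓞 K) ⧸ 𝔮)) := by push_cast; ring
        _ = 1 := by rw [h1]; rfl
    have hχpow : (χ xε) ^ k = 1 := by rw [← map_pow, hpow, map_one]
    have habs := congrArg (norm : ℂ → ℝ) hχpow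
    rw [norm_pow, norm_one] at habs
    rcases lt_trichotomy ‖χ xε‖ 1 with h|h|h
    · exact absurd habs (by have := pow_lt_one₀ (norm_nonneg _) h hk0; linarith)
    · exact h
    · exact absurd habs (by have := one_lt_pow₀ h hk0; linarith)
  set θ : ℝ := (χ xε).arg with hθdef
  have hχεval : χ xε = Complex.exp ((θ : ℂ) * Complex.I) := by
    conv_lhs => rw [← Complex.norm_mul_exp_arg_mul_I (χ xε)]
    rw [hχεabs, ← hθdef, Complex.ofReal_one, one_mul]
  -- the function F
  set F : (𝓞 K)ˣ → ℂ := fun u => χ (Ideal.Quotient.mk 𝔮 ((u : 𝓞 K))) *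
      ChiInf K σ₁ σ₂ v u₁ u₂ ((u : 𝓞 K) : K) with hFdef
  have hcoe_ne : ∀ u : (𝓞 K)ˣ, ((u : 𝓞 K) : K) ≠ 0 := fun u =>
    RingOfIntegers.coe_ne_zero_iff.mpr u.ne_zero
  have hFmul : ∀ u w : (𝓞 K)ˣ, F (u * w) = F u * F w := by
    intro u w
    simp only [hFdef, Units.val_mul, _root_.map_mul]
    rw [my_chiInf_mul K σ₁ σ₂ v u₁ u₂ (hcoe_ne u) (hcoe_ne w)]
    ring
  have hF1 : F 1 = 1 := by
    simp [hFdef, ChiInf, Real.sign_one]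
  -- value at ε
  have hFε : F ε = Complex.exp (((θ + 2*v*L + Real.pi*g : ℝ) : ℂ) * Complex.I) := by
    have hsgn1 : Real.sign (σ₁ εK) = 1 := Real.sign_of_pos hσ₁εpos
    have hcpow : ((|σ₁ εK / σ₂ εK| : ℝ) : ℂ) ^ (Complex.I * (v:ℂ)) =
        Complex.exp (((2*v*L : ℝ) : ℂ) * Complex.I) := by
      rw [hratio, Complex.cpow_def_of_ne_zero (by
        exact_mod_cast pow_ne_zero 2 hσ₁εpos.ne')]
      rw [← Complex.ofReal_log (by positivity), Real.log_pow, hLdef]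
      push_cast
      ring_nf
    have hsg : ((s : ℝ) : ℂ) ^ u₂ = Complex.exp (((Real.pi * g : ℝ) : ℂ) * Complex.I) := by
      by_cases hcase : s ^ u₂ = 1
      · rw [hg, if_pos hcase]
        push_cast
        rw [← Complex.ofReal_pow, hcase]
        simp
      · rw [hg, if_neg hcase]
        have hs2 : s ^ u₂ = -1 := by
          interval_cases u₂
          · simp at hcase
          · rcases hs1 with h|h
            · simp [h] at hcase
            · simp [h]
        push_cast
        rw [← Complex.ofReal_pow, hs2, mul_one, Complex.exp_pi_mul_I]
        norm_num
    have : F ε = χ xε * (((|σ₁ εK / σ₂ εK| : ℝ) : ℂ) ^ (Complex.I * (v:ℂ)) *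
        ((1:ℝ) : ℂ) ^ u₁ * ((s : ℝ) : ℂ) ^ u₂) := by
      simp only [hFdef, ChiInf, ← hεKdef, ← hxεdef, hsgn1, ← hsdef]
      try ring
    rw [this, hcpow, hsg, hχεval]
    rw [Complex.ofReal_one, one_pow, mul_one, ← Complex.exp_add, ← Complex.exp_add]
    push_cast
    ring_nf
  -- value at -1
  have hFneg : F (-1) = χ (Ideal.Quotient.mk 𝔮 (-1)) * (-1)^u₁ * (-1)^u₂ := by
    have hco : (((-1 : (𝓞 K)ˣ) : 𝓞 K) : K) = -1 := by push_cast; ring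
    have hσ1 : σ₁ ((((-1 : (𝓞 K)ˣ) : 𝓞 K)) : K) = -1 := by rw [hco, map_neg, map_one]
    have hσ2 : σ₂ ((((-1 : (𝓞 K)ˣ) : 𝓞 K)) : K) = -1 := by rw [hco, map_neg, map_one]
    have hsgnneg : Real.sign (-1 : ℝ) = -1 := by
      rw [show (-1 : ℝ) = -(1:ℝ) by norm_num, Real.sign_neg, Real.sign_one]
    simp only [hFdef, ChiInf, hσ1, hσ2, hsgnneg, Units.val_neg, Units.val_one]
    try norm_num
    try (rw [hsgnneg]; push_cast; ring)
  -- condition at ε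
  have hEiff : F ε = 1 ↔ (∃ n : ℤ, v = Real.pi * ((n : ℝ) + ρ) / L) := by
    rw [hFε, Complex.exp_eq_one_iff]
    have hg01 : g = 0 ∨ g = 1 := by rw [hg]; split <;> simp
    constructor
    · rintro ⟨m, hm⟩
      have hre : θ + 2*v*L + Real.pi * g = m * (2 * Real.pi) := by
        have h' : ((θ + 2*v*L + Real.pi*g : ℝ) : ℂ) = (((m : ℝ) * (2*Real.pi) : ℝ) : ℂ) := by
          apply mul_right_cancel₀ Complex.I_ne_zero
          rw [hm]; push_cast; ring
        exact_mod_cast h'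
      rcases hg01 with h0|h1
      · refine ⟨m, ?_⟩
        rw [hρ, h0, eq_div_iff hLpos.ne']
        rw [h0] at hre
        field_simp
        linear_combination hre
      · refine ⟨m - 1, ?_⟩
        rw [hρ, h1, eq_div_iff hLpos.ne']
        rw [h1] at hre
        push_cast
        field_simp
        linear_combination hre
    · rintro ⟨n, hn⟩
      rcases hg01 with h0|h1
      · refine ⟨n, ?_⟩
        have hre : θ + 2*v*L + Real.pi * g = n * (2 * Real.pi) := by
          rw [hρ, h0, eq_div_iff hLpos.ne'] at hn
          rw [h0]
          field_simp at hn
          apply mul_left_cancel₀ hπ.ne'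
          linear_combination Real.pi * hn
        rw [show ((θ + 2*v*L + Real.pi*g : ℝ) : ℂ) = (((n : ℝ) * (2*Real.pi) : ℝ) : ℂ) by
          exact_mod_cast congrArg (fun t : ℝ => (t : ℂ)) hre]
        push_cast
        ring
      · refine ⟨n + 1, ?_⟩
        have hre : θ + 2*v*L + Real.pi * g = (n + 1 : ℝ) * (2 * Real.pi) := by
          rw [hρ, h1, eq_div_iff hLpos.ne'] at hn
          rw [h1]
          field_simp at hn
          apply mul_left_cancel₀ hπ.ne'
          linear_combination Real.pi * hn
        rw [show ((θ + 2*v*L + Real.pi*g : ℝ) : ℂ) = (((n + 1 : ℝ) * (2*Real.pi) : ℝ) : ℂ) by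
          exact_mod_cast congrArg (fun t : ℝ => (t : ℂ)) hre]
        push_cast
        ring
  -- condition at -1
  have hMiff : F (-1) = 1 ↔
      ((χ (Ideal.Quotient.mk 𝔮 (-1)) = 1 → u₁ = u₂) ∧
       (χ (Ideal.Quotient.mk 𝔮 (-1)) = -1 → u₁ ≠ u₂)) := by
    have hcc : χ (Ideal.Quotient.mk 𝔮 (-1)) = 1 ∨ χ (Ideal.Quotient.mk 𝔮 (-1)) = -1 := by
      apply mul_self_eq_one_iff.mp
      rw [← _root_.map_mul χ, ← _root_.map_mul (Ideal.Quotient.mk 𝔮)]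
      norm_num
    rw [hFneg]
    rcases hcc with h|h <;> rw [h] <;> interval_cases u₁ <;> interval_cases u₂ <;>
      norm_num
  -- conclusion
  constructor
  · intro h
    have h1 : F ε = 1 := h ε
    have h2 : F (-1) = 1 := h (-1)
    exact ⟨hEiff.mp h1, (hMiff.mp h2).1, (hMiff.mp h2).2⟩
  · rintro ⟨hv, hp1, hp2⟩ u
    have hFε1 : F ε = 1 := hEiff.mpr hv
    have hFm1 : F (-1) = 1 := hMiff.mpr ⟨hp1, hp2⟩
    have hFpow : ∀ k : ℕ, F (ε ^ k) = 1 := by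
      intro k
      induction k with
      | zero => simpa using hF1
      | succ k ih => rw [pow_succ, hFmul, ih, hFε1, one_mul]
    have hFz : ∀ n : ℤ, F (ε ^ n) = 1 := by
      intro n
      rcases n.eq_nat_or_neg with ⟨k, rfl | rfl⟩
      · rw [zpow_natCast]; exact hFpow k
      · have h1 : F (ε ^ (k:ℤ) * ε ^ (-(k:ℤ))) = 1 := by
          rw [← zpow_add]; simpa using hF1
        rw [hFmul, zpow_natCast, hFpow k, one_mul] at h1
        exact h1
    obtain ⟨n, rfl | rfl⟩ := hεfund u
    · exact hFz n
    · have : F (-ε ^ n) = F (-1) * F (ε ^ n) := by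
        rw [← hFmul]; norm_num
      show F (-ε ^ n) = 1
      rw [this, hFm1, hFz, one_mul]

end
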